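/- Let m ≥ 1 and let X₁, …, X_m be elements of a commutative ring. Let A be the 2m×2m matrix whose i-th row (for 1 ≤ i ≤ m) is (Xᵢ², Xᵢ³, …, Xᵢ^{2m+1}) and whose (m+i)-th row (for 1 ≤ i ≤ m) is (2Xᵢ, 3Xᵢ², …, (2m+1)Xᵢ^{2m}). Then det A = (−1)^{m(m−1)/2} · (∏_{i=1}^m Xᵢ⁴) · ∏_{1 ≤ i < j ≤ m} (X_j − Xᵢ)⁴. -/

import Mathlib

open Finset Matrix

lemma aux_prod_lt_pairs {M : Type*} [CommMonoid M] {m : ℕ} (f : Fin m → Fin m → M) :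
    ∏ p ∈ Finset.univ.filter (fun p : Fin m × Fin m => p.1 < p.2), f p.1 p.2
      = ∏ i, ∏ j ∈ Ioi i, f i j :=
  Finset.prod_finset_product' _ _ _ (by simp)

lemma aux_card_sum (m : ℕ) : ∑ i : Fin m, #(Ioi i) = m * (m - 1) / 2 := by
  simp only [Fin.card_Ioi]
  rw [Fin.sum_univ_eq_sum_range, ← Finset.sum_range_id m]
  exact Finset.sum_range_reflect id m

lemma aux_Ioi_prod {M : Type*} [CommMonoid M] {m : ℕ} (i : Fin m) (f : Fin m → M) :
    ∏ j ∈ Ioi i, f j = ∏ j, if i < j then f j else 1 := by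
  rw [← Finset.prod_filter]
  congr 1
  ext j; simp

lemma aux_split {S : Type*} [CommRing S] {m : ℕ} (Y Z : Fin m → S) :
    (∏ i : Fin (m + m), ∏ j ∈ Ioi i,
        (Sum.elim Y Z (finSumFinEquiv.symm j) - Sum.elim Y Z (finSumFinEquiv.symm i)))
      = (∏ a, ∏ b ∈ Ioi a, (Y b - Y a) * (Z b - Z a)) * ∏ a, ∏ b, (Z b - Y a) := by
  have h1 : ∀ a b : Fin m, (a : ℕ) < m + (b : ℕ) := fun a b =>
    lt_of_lt_of_le a.isLt (Nat.le_add_right m b)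
  have h2 : ∀ a b : Fin m, ¬ (m + (a : ℕ) < (b : ℕ)) := fun a b =>
    Nat.not_lt.mpr (le_trans b.isLt.le (Nat.le_add_right m a))
  simp_rw [aux_Ioi_prod]
  simp_rw [Fin.prod_univ_add]
  simp_rw [finSumFinEquiv_symm_apply_castAdd, finSumFinEquiv_symm_apply_natAdd,
    Sum.elim_inl, Sum.elim_inr, Fin.lt_def, Fin.coe_castAdd, Fin.coe_natAdd]
  simp_rw [h1, h2]
  simp only [if_true, Finset.prod_const_one, mul_one, Finset.prod_mul_distrib]
  simp only [if_false, Finset.prod_const_one, one_mul, Nat.add_lt_add_iff_left, ite_mul_one, Finset.prod_mul_distrib]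
  ring

lemma aux_detD {S : Type*} [CommRing S] {m : ℕ} (Y Z : Fin m → S) (s : Finset (Fin m)) :
    Matrix.det (Matrix.of fun i j : Fin m ⊕ Fin m =>
      Sum.elim (fun a => Y a ^ ((finSumFinEquiv j : ℕ) + 2))
        (fun a => if a ∈ s then
            Z a ^ ((finSumFinEquiv j : ℕ) + 2) - Y a ^ ((finSumFinEquiv j : ℕ) + 2)
          else Z a ^ ((finSumFinEquiv j : ℕ) + 2)) i)
    = Matrix.det (Matrix.of fun i j : Fin m ⊕ Fin m =>
      Sum.elim (fun a => Y a ^ ((finSumFinEquiv j : ℕ) + 2))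
        (fun a => Z a ^ ((finSumFinEquiv j : ℕ) + 2)) i) := by
  induction s using Finset.induction_on with
  | empty => simp
  | @insert a s ha ih =>
    rw [← ih]
    set A := Matrix.of fun i j : Fin m ⊕ Fin m =>
      Sum.elim (fun a => Y a ^ ((finSumFinEquiv j : ℕ) + 2))
        (fun a => if a ∈ s then
            Z a ^ ((finSumFinEquiv j : ℕ) + 2) - Y a ^ ((finSumFinEquiv j : ℕ) + 2)
          else Z a ^ ((finSumFinEquiv j : ℕ) + 2)) i with hA
    have key : (Matrix.of fun i j : Fin m ⊕ Fin m =>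
        Sum.elim (fun c => Y c ^ ((finSumFinEquiv j : ℕ) + 2))
          (fun c => if c ∈ insert a s then
              Z c ^ ((finSumFinEquiv j : ℕ) + 2) - Y c ^ ((finSumFinEquiv j : ℕ) + 2)
            else Z c ^ ((finSumFinEquiv j : ℕ) + 2)) i)
        = Matrix.updateRow A (Sum.inr a) (A (Sum.inr a) + (-1 : S) • A (Sum.inl a)) := by
      ext i j
      rcases i with b | b
      · simp [hA, Matrix.updateRow_apply]
      · rcases eq_or_ne b a with rfl | hb
        · simp [hA, Matrix.updateRow_apply, ha]
          ring
        · simp [hA, Matrix.updateRow_apply, hb, Finset.mem_insert]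
    rw [key, Matrix.det_updateRow_add_smul_self _ (by simp) _]

lemma aux_key {S : Type*} [CommRing S] {m : ℕ} (Y Z : Fin m → S) :
    (∏ a, (Z a - Y a)) * Matrix.det (Matrix.of fun i j : Fin m ⊕ Fin m =>
        Sum.elim (fun a => Y a ^ ((finSumFinEquiv j : ℕ) + 2))
          (fun a => ∑ k ∈ Finset.range ((finSumFinEquiv j : ℕ) + 2),
              Z a ^ k * Y a ^ ((finSumFinEquiv j : ℕ) + 1 - k)) i)
      = (∏ a, (Y a ^ 2 * Z a ^ 2)) *
        ((∏ a, ∏ b ∈ Ioi a, (Y b - Y a) * (Z b - Z a)) * ∏ a, ∏ b, (Z b - Y a)) := by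
  have hg : ∀ (x y : S) (n : ℕ),
      (x - y) * ∑ k ∈ Finset.range (n + 2), x ^ k * y ^ (n + 1 - k)
        = x ^ (n + 2) - y ^ (n + 2) := by
    intro x y n
    have h : ∑ k ∈ Finset.range (n + 2), x ^ k * y ^ (n + 1 - k)
        = ∑ k ∈ Finset.range (n + 2), x ^ k * y ^ (n + 2 - 1 - k) := by
      refine Finset.sum_congr rfl fun k _ => ?_
      congr 1
    rw [mul_comm, h, geom_sum₂_mul]
  -- Step 1: multiply bottom rows by (Z a - Y a)
  have step1 : (∏ a, (Z a - Y a)) * Matrix.det (Matrix.of fun i j : Fin m ⊕ Fin m =>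
        Sum.elim (fun a => Y a ^ ((finSumFinEquiv j : ℕ) + 2))
          (fun a => ∑ k ∈ Finset.range ((finSumFinEquiv j : ℕ) + 2),
              Z a ^ k * Y a ^ ((finSumFinEquiv j : ℕ) + 1 - k)) i)
      = Matrix.det (Matrix.of fun i j : Fin m ⊕ Fin m =>
        Sum.elim (fun a => Y a ^ ((finSumFinEquiv j : ℕ) + 2))
          (fun a => if a ∈ (Finset.univ : Finset (Fin m)) then
              Z a ^ ((finSumFinEquiv j : ℕ) + 2) - Y a ^ ((finSumFinEquiv j : ℕ) + 2)
            else Z a ^ ((finSumFinEquiv j : ℕ) + 2)) i) := by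
    rw [show (Matrix.of fun i j : Fin m ⊕ Fin m =>
        Sum.elim (fun a => Y a ^ ((finSumFinEquiv j : ℕ) + 2))
          (fun a => if a ∈ (Finset.univ : Finset (Fin m)) then
              Z a ^ ((finSumFinEquiv j : ℕ) + 2) - Y a ^ ((finSumFinEquiv j : ℕ) + 2)
            else Z a ^ ((finSumFinEquiv j : ℕ) + 2)) i)
      = Matrix.of fun i j : Fin m ⊕ Fin m =>
          (Sum.elim (fun _ => (1 : S)) (fun a => Z a - Y a) i) *
          (Matrix.of fun i j : Fin m ⊕ Fin m =>
            Sum.elim (fun a => Y a ^ ((finSumFinEquiv j : ℕ) + 2))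
              (fun a => ∑ k ∈ Finset.range ((finSumFinEquiv j : ℕ) + 2),
                  Z a ^ k * Y a ^ ((finSumFinEquiv j : ℕ) + 1 - k)) i) i j from by
        ext i j
        rcases i with a | a
        · simp
        · simp [hg]]
    rw [Matrix.det_mul_column]
    rw [Fintype.prod_sum_type]
    simp
  rw [step1, aux_detD]
  -- Step 3: factor out squares
  have step3 : Matrix.det (Matrix.of fun i j : Fin m ⊕ Fin m =>
        Sum.elim (fun a => Y a ^ ((finSumFinEquiv j : ℕ) + 2))
          (fun a => Z a ^ ((finSumFinEquiv j : ℕ) + 2)) i)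
      = (∏ a, (Y a ^ 2 * Z a ^ 2)) *
        Matrix.det (Matrix.of fun i j : Fin m ⊕ Fin m =>
          Sum.elim Y Z i ^ (finSumFinEquiv j : ℕ)) := by
    rw [show (Matrix.of fun i j : Fin m ⊕ Fin m =>
        Sum.elim (fun a => Y a ^ ((finSumFinEquiv j : ℕ) + 2))
          (fun a => Z a ^ ((finSumFinEquiv j : ℕ) + 2)) i)
      = Matrix.of fun i j : Fin m ⊕ Fin m =>
          (Sum.elim Y Z i ^ 2) *
          ((Matrix.of fun i j : Fin m ⊕ Fin m =>
            Sum.elim Y Z i ^ (finSumFinEquiv j : ℕ)) i j) from by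
        ext i j
        rcases i with a | a <;> · simp [pow_add]; ring]
    rw [Matrix.det_mul_column]
    congr 1
    rw [Fintype.prod_sum_type, ← Finset.prod_mul_distrib]
    simp
  rw [step3]
  congr 1
  -- Step 4/5: vandermonde
  have step4 : (Matrix.of fun i j : Fin m ⊕ Fin m =>
        Sum.elim Y Z i ^ (finSumFinEquiv j : ℕ))
      = (Matrix.vandermonde (fun i : Fin (m + m) =>
          Sum.elim Y Z (finSumFinEquiv.symm i))).submatrix finSumFinEquiv finSumFinEquiv := by
    ext i j
    simp [Matrix.vandermonde_apply]
  rw [step4, Matrix.det_submatrix_equiv_self, Matrix.det_vandermonde, aux_split]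

lemma aux_poly (m : ℕ) :
    Matrix.det (Matrix.of fun i j : Fin m ⊕ Fin m =>
        Sum.elim (fun a => (MvPolynomial.X (R := ℤ) (Sum.inl a)) ^ ((finSumFinEquiv j : ℕ) + 2))
          (fun a => ∑ k ∈ Finset.range ((finSumFinEquiv j : ℕ) + 2),
              (MvPolynomial.X (Sum.inr a)) ^ k *
                (MvPolynomial.X (Sum.inl a)) ^ ((finSumFinEquiv j : ℕ) + 1 - k)) i)
      = (∏ a, ((MvPolynomial.X (R := ℤ) (Sum.inl a)) ^ 2 * (MvPolynomial.X (Sum.inr a)) ^ 2)) *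
        ((∏ a, ∏ b ∈ Ioi a,
            (MvPolynomial.X (R := ℤ) (Sum.inl b) - MvPolynomial.X (Sum.inl a)) *
              (MvPolynomial.X (Sum.inr b) - MvPolynomial.X (Sum.inr a))) *
          ∏ a, ∏ b ∈ Finset.univ.erase a,
            (MvPolynomial.X (R := ℤ) (Sum.inr b) - MvPolynomial.X (Sum.inl a))) := by
  have h := aux_key (S := MvPolynomial (Fin m ⊕ Fin m) ℤ)
    (fun a => MvPolynomial.X (Sum.inl a)) (fun a => MvPolynomial.X (Sum.inr a))
  have hsplit : ∀ a : Fin m,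
      (∏ b, (MvPolynomial.X (R := ℤ) (Sum.inr b) - MvPolynomial.X (Sum.inl a)))
        = (MvPolynomial.X (Sum.inr a) - MvPolynomial.X (Sum.inl a)) *
          ∏ b ∈ Finset.univ.erase a,
            (MvPolynomial.X (R := ℤ) (Sum.inr b) - MvPolynomial.X (Sum.inl a)) :=
    fun a => (Finset.mul_prod_erase Finset.univ _ (Finset.mem_univ a)).symm
  simp_rw [hsplit, Finset.prod_mul_distrib] at h
  have hP : (∏ a : Fin m,
      (MvPolynomial.X (R := ℤ) (Sum.inr a) - MvPolynomial.X (Sum.inl a))) ≠ 0 := by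
    rw [Finset.prod_ne_zero_iff]
    intro a _
    exact sub_ne_zero_of_ne fun hc => Sum.inr_ne_inl (MvPolynomial.X_injective hc)
  apply mul_left_cancel₀ hP
  rw [h]
  simp only [Finset.prod_mul_distrib]
  ring

lemma aux_R {R : Type*} [CommRing R] {m : ℕ} (x : Fin m → R) :
    Matrix.det (Matrix.of fun i j : Fin m ⊕ Fin m =>
        Sum.elim (fun a => x a ^ ((finSumFinEquiv j : ℕ) + 2))
          (fun a => (((finSumFinEquiv j : ℕ) + 2 : ℕ) : R) * x a ^ ((finSumFinEquiv j : ℕ) + 1)) i)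
      = (∏ a, x a ^ 4) *
        ((∏ a, ∏ b ∈ Ioi a, (x b - x a) * (x b - x a)) *
          ∏ a, ∏ b ∈ Finset.univ.erase a, (x b - x a)) := by
  set φ : MvPolynomial (Fin m ⊕ Fin m) ℤ →+* R :=
    MvPolynomial.eval₂Hom (Int.castRingHom R) (Sum.elim x x) with hφ
  have h := congrArg φ (aux_poly m)
  rw [RingHom.map_det, RingHom.mapMatrix_apply] at h
  have hsum : ∀ (r : R) (n : ℕ),
      ∑ k ∈ Finset.range (n + 2), r ^ k * r ^ (n + 1 - k) = ((n + 2 : ℕ) : R) * r ^ (n + 1) := by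
    intro r n
    have hc : ∀ k ∈ Finset.range (n + 2), r ^ k * r ^ (n + 1 - k) = r ^ (n + 1) := by
      intro k hk
      rw [← pow_add]
      congr 1
      have := Finset.mem_range.mp hk
      omega
    rw [Finset.sum_congr rfl hc, Finset.sum_const, Finset.card_range, nsmul_eq_mul]
  have hM : (Matrix.of fun i j : Fin m ⊕ Fin m =>
        Sum.elim (fun a => (MvPolynomial.X (R := ℤ) (Sum.inl a)) ^ ((finSumFinEquiv j : ℕ) + 2))
          (fun a => ∑ k ∈ Finset.range ((finSumFinEquiv j : ℕ) + 2),
              (MvPolynomial.X (Sum.inr a)) ^ k *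
                (MvPolynomial.X (Sum.inl a)) ^ ((finSumFinEquiv j : ℕ) + 1 - k)) i).map φ
      = Matrix.of fun i j : Fin m ⊕ Fin m =>
          Sum.elim (fun a => x a ^ ((finSumFinEquiv j : ℕ) + 2))
            (fun a => (((finSumFinEquiv j : ℕ) + 2 : ℕ) : R) *
              x a ^ ((finSumFinEquiv j : ℕ) + 1)) i := by
    ext i j
    rcases i with a | a
    · simp [hφ]
    · simp [hφ, hsum]
  rw [hM] at h
  rw [h]
  simp only [hφ, _root_.map_mul, map_prod, map_sub, map_pow, MvPolynomial.eval₂Hom_X',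
    Sum.elim_inl, Sum.elim_inr]
  have h4 : ∀ r : R, r ^ 2 * r ^ 2 = r ^ 4 := fun r => by ring
  simp_rw [h4]

theorem det_confluent_vandermonde_shifted {R : Type*} [CommRing R] (m : ℕ) (hm : 1 ≤ m)
    (X : Fin m → R) :
    Matrix.det (Matrix.of fun i j : Fin (2 * m) =>
      if h : (i : ℕ) < m then X ⟨i, h⟩ ^ ((j : ℕ) + 2)
      else (((j : ℕ) + 2 : ℕ) : R) * X ⟨(i : ℕ) - m, by have := i.isLt; omega⟩ ^ ((j : ℕ) + 1))
    = (-1) ^ (m * (m - 1) / 2) * (∏ i, X i ^ 4) *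
        ∏ p ∈ Finset.univ.filter (fun p : Fin m × Fin m => p.1 < p.2),
          (X p.2 - X p.1) ^ 4 := by
  set E : (Fin m ⊕ Fin m) ≃ Fin (2 * m) :=
    finSumFinEquiv.trans (finCongr (two_mul m).symm) with hE
  rw [← Matrix.det_submatrix_equiv_self E]
  have hEl : ∀ a : Fin m, ((E (Sum.inl a) : ℕ)) = (a : ℕ) := by
    intro a; simp [hE]
  have hEr : ∀ a : Fin m, ((E (Sum.inr a) : ℕ)) = m + (a : ℕ) := by
    intro a; simp [hE, Nat.add_comm]
  have hsub : (Matrix.of fun i j : Fin (2 * m) =>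
      if h : (i : ℕ) < m then X ⟨i, h⟩ ^ ((j : ℕ) + 2)
      else (((j : ℕ) + 2 : ℕ) : R) * X ⟨(i : ℕ) - m, by have := i.isLt; omega⟩
        ^ ((j : ℕ) + 1)).submatrix E E
      = Matrix.of fun i j : Fin m ⊕ Fin m =>
        Sum.elim (fun a => X a ^ ((finSumFinEquiv j : ℕ) + 2))
          (fun a => (((finSumFinEquiv j : ℕ) + 2 : ℕ) : R) *
            X a ^ ((finSumFinEquiv j : ℕ) + 1)) i := by
    ext i j
    have hEj : ((E j : ℕ)) = (finSumFinEquiv j : ℕ) := by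
      simp [hE]
    rcases i with a | a
    · simp only [Matrix.submatrix_apply, Matrix.of_apply, hEj]
      rw [dif_pos (by rw [hEl]; exact a.isLt)]
      have ha : ((⟨(E (Sum.inl a) : ℕ), by rw [hEl]; exact a.isLt⟩ : Fin m)) = a :=
        Fin.ext (hEl a)
      rw [ha]
      simp
    · simp only [Matrix.submatrix_apply, Matrix.of_apply, hEj]
      rw [dif_neg (by rw [hEr]; omega)]
      have ha : ((⟨(E (Sum.inr a) : ℕ) - m, by have := (E (Sum.inr a)).isLt; omega⟩ : Fin m)) = a :=
        Fin.ext (by simp [hEr])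
      rw [ha]
      simp
  rw [hsub, aux_R]
  -- final algebra
  have hoff : (∏ a : Fin m, ∏ b ∈ Finset.univ.erase a, (X b - X a))
      = ∏ i, ∏ j ∈ Ioi i, ((X j - X i) * (X i - X j)) := by
    have h := Finset.prod_prod_Ioi_mul_eq_prod_prod_off_diag (f := fun i j : Fin m => X i - X j)
    simp only [Finset.compl_singleton] at h
    exact (Finset.prod_congr rfl fun a _ => Finset.prod_congr (by ext x; simp) fun b _ => rfl).trans h.symm
  rw [hoff]
  rw [aux_prod_lt_pairs (fun i j => (X j - X i) ^ 4)]
  rw [mul_assoc, ← Finset.prod_mul_distrib]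
  simp_rw [← Finset.prod_mul_distrib]
  have hterm : ∀ u v : R, (u - v) * (u - v) * ((u - v) * (v - u)) = (-1) * (u - v) ^ 4 :=
    fun u v => by ring
  simp_rw [hterm]
  simp_rw [Finset.prod_mul_distrib, Finset.prod_const]
  rw [Finset.prod_pow_eq_pow_sum, aux_card_sum]
  ring
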